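/- Let H be a graph with no cycles of length at most 8, and let H² be its square restricted to distance exactly 2 (u ~ v in H² iff there is a path of length 2 between u and v in H). Then every clique of H² is contained in the neighborhood N_H(v) of some vertex v of H. -/

import Mathlib

/-- The square of `H` restricted to distance exactly 2:
`u ~ v` iff `u ≠ v` and there is a path of length 2 between `u` and `v` in `H`. -/
def distTwoSquare {V : Type*} (H : SimpleGraph V) : SimpleGraph V where
  Adj u v := u ≠ v ∧ ∃ w, H.Adj u w ∧ H.Adj w v
  symm := ⟨fun u v ⟨huv, w, h1, h2⟩ => ⟨huv.symm, w, h2.symm, h1.symm⟩⟩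
  loopless := ⟨fun u h => h.1 rfl⟩

private lemma cyc3 {V : Type*} {H : SimpleGraph V} {a b c : V}
    (h1 : H.Adj a b) (h2 : H.Adj b c) (h3 : H.Adj c a) :
    ∃ w : H.Walk a a, w.IsCycle ∧ w.length = 3 := by
  refine ⟨.cons h1 (.cons h2 (.cons h3 .nil)), ?_, rfl⟩
  simp [SimpleGraph.Walk.isCycle_def, SimpleGraph.Walk.isTrail_def,
    h1.ne, h2.ne, h3.ne, h1.ne', h2.ne', h3.ne', (h3.ne').symm]

private lemma cyc4 {V : Type*} {H : SimpleGraph V} {a b c d : V}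
    (h1 : H.Adj a b) (h2 : H.Adj b c) (h3 : H.Adj c d) (h4 : H.Adj d a)
    (hac : a ≠ c) (hbd : b ≠ d) :
    ∃ w : H.Walk a a, w.IsCycle ∧ w.length = 4 := by
  refine ⟨.cons h1 (.cons h2 (.cons h3 (.cons h4 .nil))), ?_, rfl⟩
  simp [SimpleGraph.Walk.isCycle_def, SimpleGraph.Walk.isTrail_def,
    h1.ne, h2.ne, h3.ne, h4.ne, h1.ne', h2.ne', h3.ne', h4.ne',
    hac, hbd, hac.symm, hbd.symm]

private lemma cyc6 {V : Type*} {H : SimpleGraph V} {a b c d e f : V}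
    (h1 : H.Adj a b) (h2 : H.Adj b c) (h3 : H.Adj c d) (h4 : H.Adj d e)
    (h5 : H.Adj e f) (h6 : H.Adj f a)
    (hac : a ≠ c) (had : a ≠ d) (hae : a ≠ e)
    (hbd : b ≠ d) (hbe : b ≠ e) (hbf : b ≠ f)
    (hce : c ≠ e) (hcf : c ≠ f) (hdf : d ≠ f) :
    ∃ w : H.Walk a a, w.IsCycle ∧ w.length = 6 := by
  refine ⟨.cons h1 (.cons h2 (.cons h3 (.cons h4 (.cons h5 (.cons h6 .nil))))), ?_, rfl⟩
  simp [SimpleGraph.Walk.isCycle_def, SimpleGraph.Walk.isTrail_def,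
    h1.ne, h2.ne, h3.ne, h4.ne, h5.ne, h6.ne,
    h1.ne', h2.ne', h3.ne', h4.ne', h5.ne', h6.ne',
    hac, had, hae, hbd, hbe, hbf, hce, hcf, hdf,
    hac.symm, had.symm, hae.symm, hbd.symm, hbe.symm, hbf.symm, hce.symm, hcf.symm, hdf.symm]

/-- If `H` has no cycles of length at most 8 (and every vertex has a neighbor), then every
clique of the square `H²` is contained in the neighborhood `N_H(v)` of some vertex `v`. -/
theorem stmt6 {V : Type*} [Nonempty V] (H : SimpleGraph V)
    (hgirth : ∀ (u : V) (c : H.Walk u u), c.IsCycle → 8 < c.length)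
    (hdeg : ∀ u : V, ∃ w, H.Adj u w) :
    ∀ s : Set V, (distTwoSquare H).IsClique s → ∃ v : V, s ⊆ H.neighborSet v := by
  intro s hs
  -- no two members of s are H-adjacent
  have hindep : ∀ a ∈ s, ∀ b ∈ s, ¬ H.Adj a b := by
    intro a ha b hb hab
    have hne : a ≠ b := hab.ne
    obtain ⟨-, w, hw1, hw2⟩ := hs ha hb hne
    obtain ⟨c, hc, hl⟩ := cyc3 hw1 hw2 hab.symm
    have := hgirth _ _ hc
    omega
  by_cases hsub : ∃ a, s ⊆ {a}
  · obtain ⟨a, hsa⟩ := hsub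
    obtain ⟨w, hw⟩ := hdeg a
    exact ⟨w, fun x hx => by have := hsa hx; simp_all; exact hw.symm⟩
  · push_neg at hsub
    -- two distinct elements of s
    have : ∃ a ∈ s, ∃ b ∈ s, a ≠ b := by
      by_contra h
      push_neg at h
      rcases s.eq_empty_or_nonempty with he | ⟨a, ha⟩
      · exact hsub (Classical.arbitrary V) (by simp [he])
      · exact hsub a (fun x hx => (h x hx a ha))
    obtain ⟨a, ha, b, hb, hab⟩ := this
    obtain ⟨-, w, hw1, hw2⟩ := hs ha hb hab
    refine ⟨w, fun c hc => ?_⟩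
    simp only [SimpleGraph.mem_neighborSet]
    by_cases hca : c = a
    · subst hca; exact hw1.symm
    by_cases hcb : c = b
    · subst hcb; exact hw2
    -- c distinct from a, b; get common neighbors x (a-x-c) and y (b-y-c)
    obtain ⟨-, x, hx1, hx2⟩ := hs ha hc (Ne.symm hca)
    obtain ⟨-, y, hy1, hy2⟩ := hs hb hc (Ne.symm hcb)
    by_cases hxw : x = w
    · subst hxw; exact hx2
    by_cases hyw : y = w
    · subst hyw; exact hy2
    exfalso
    -- w ∉ s, x ∉ s∩{b}, etc.
    have hwc : w ≠ c := fun h => hindep a ha c hc (h ▸ hw1)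
    have hxb : x ≠ b := fun h => hindep a ha b hb (h ▸ hx1)
    have hya : y ≠ a := fun h => hindep b hb a ha (h ▸ hy1)
    by_cases hxy : x = y
    · -- 4-cycle a w b x
      subst hxy
      obtain ⟨cc, hcc, hl⟩ := cyc4 hw1 hw2 hy1 hx1.symm hab (fun h => hyw h.symm)
      have := hgirth _ _ hcc
      omega
    · -- 6-cycle a w b y c x
      obtain ⟨cc, hcc, hl⟩ := cyc6 hw1 hw2 hy1 hy2 hx2.symm hx1.symm
        hab (fun h => hya h.symm) (fun h => hca h.symm) (fun h => hyw h.symm) hwc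
        (fun h => hxw h.symm) (fun h => hcb h.symm) (fun h => hxb h.symm) (fun h => hxy h.symm)
      have := hgirth _ _ hcc
      omega
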